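/- Suppose f(x) = (1/n) Σ_{i=1}^n f_i(x) is β-smooth, each f_i is differentiable with ‖∇f_i(x)‖ ≤ σ for all i and x, and p < 1. Let ĝ(x) = g(x)/(1-p) with g(x) = (1/n) Σ_{i=1}^{n/c} Y_i g[i](x), g[i](x) = Σ_{j=1}^c ∇f_{c(i-1)+j}(x), where the Y_i are the block non-straggler indicators induced by a uniformly random r-subset of k workers partitioned into n/c blocks of size ℓ = kc/n (2ℓ ≤ k). Then the single step x' = x - ((1-p)/β) ĝ(x) satisfies E[f(x')] ≤ f(x) - ((1-p)/(2β))‖∇f(x)‖² + (q-p)cσ²/(2βn), where p, q satisfy E[Y_i] = 1-p and E[Y_i Y_j] = 1-q for i ≠ j, and the expectation is over the random non-straggler set. -/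

import Mathlib

open Finset

/-- Uniform expectation over all `r`-element subsets of the `k` workers. -/
noncomputable def unifExp (k r : ℕ) (X : Finset (Fin k) → ℝ) : ℝ :=
  (∑ S ∈ Finset.powersetCard r (Finset.univ : Finset (Fin k)), X S) / (k.choose r : ℝ)

/-- The index `c*(i-1)+j` (0-indexed: `c*i + j`) of the `j`-th task in the `i`-th block. -/
def taskIdx (n c : ℕ) (hc : c ∣ n) (i : Fin (n / c)) (j : Fin c) : Fin n :=
  ⟨c * i.val + j.val, by
    calc c * i.val + j.val < c * i.val + c := Nat.add_lt_add_left j.isLt _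
      _ = c * (i.val + 1) := (Nat.mul_succ c i.val).symm
      _ ≤ c * (n / c) := Nat.mul_le_mul (Nat.le_refl c) i.isLt
      _ = n := Nat.mul_div_cancel' hc⟩

lemma eh_grad_avg {d n : ℕ} (f : Fin n → EuclideanSpace ℝ (Fin d) → ℝ)
    (hdiff : ∀ i, Differentiable ℝ (f i)) (x : EuclideanSpace ℝ (Fin d)) :
    gradient (fun y => (1 / (n : ℝ)) * ∑ i, f i y) x
      = (1 / (n : ℝ)) • ∑ i, gradient (f i) x := by
  have h : HasGradientAt (fun y => (1 / (n : ℝ)) * ∑ i, f i y)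
      ((1 / (n : ℝ)) • ∑ i, gradient (f i) x) x := by
    rw [hasGradientAt_iff_hasFDerivAt]
    have h1 : ∀ i : Fin n, HasFDerivAt (f i)
        ((InnerProductSpace.toDual ℝ _) (gradient (f i) x)) x := fun i =>
      hasGradientAt_iff_hasFDerivAt.mp ((hdiff i x).hasGradientAt)
    have h2 : HasFDerivAt (fun y => ∑ i, f i y)
        (∑ i, (InnerProductSpace.toDual ℝ _) (gradient (f i) x)) x :=
      HasFDerivAt.fun_sum (fun i _ => h1 i)
    have h3 := h2.const_mul ((1 : ℝ) / n)
    convert h3 using 1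
    · rfl
    simp [map_smul, map_sum, smul_comm]
  exact h.gradient

lemma sum_taskIdx {M : Type*} [AddCommMonoid M] {n c : ℕ} (hn : 0 < n) (hc : c ∣ n)
    (v : Fin n → M) :
    ∑ t : Fin n, v t = ∑ i : Fin (n / c), ∑ j : Fin c, v (taskIdx n c hc i j) := by
  have hcpos : 0 < c := Nat.pos_of_dvd_of_pos hc hn
  have hbij : Function.Bijective
      (fun ij : Fin (n/c) × Fin c => taskIdx n c hc ij.1 ij.2) := by
    rw [Fintype.bijective_iff_injective_and_card]
    constructor
    · rintro ⟨i, j⟩ ⟨i', j'⟩ h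
      have h' : c * i.val + j.val = c * i'.val + j'.val := congrArg Fin.val h
      have hi : i.val = i'.val := by
        have := congrArg (· / c) h'
        simpa [Nat.mul_add_div hcpos, Nat.div_eq_of_lt j.isLt, Nat.div_eq_of_lt j'.isLt] using this
      have hj : j.val = j'.val := by rw [hi] at h'; omega
      simp [Prod.ext_iff, Fin.ext_iff, hi, hj]
    · simp [Nat.div_mul_cancel hc]
  calc ∑ t : Fin n, v t
      = ∑ ij : Fin (n/c) × Fin c, v (taskIdx n c hc ij.1 ij.2) :=
        (Fintype.sum_bijective _ hbij _ _ (fun ij => rfl)).symm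
    _ = ∑ i : Fin (n / c), ∑ j : Fin c, v (taskIdx n c hc i j) :=
        Fintype.sum_prod_type _

lemma eh_aux {d m k r : ℕ} (hr : r ≤ k)
    (Y : Fin m → Finset (Fin k) → ℝ)
    (hY01 : ∀ i S, Y i S = 0 ∨ Y i S = 1)
    (g : Fin m → EuclideanSpace ℝ (Fin d))
    (F : EuclideanSpace ℝ (Fin d) → ℝ) (x : EuclideanSpace ℝ (Fin d))
    (β p q nn M : ℝ) (hβ : 0 < β) (hnn : 0 < nn)
    (hgrad : gradient F x = (1 / nn) • ∑ i, g i)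
    (hgbound : ∑ i, ‖g i‖ ^ 2 ≤ M)
    (hsmooth : ∀ y, F y ≤ F x + inner ℝ (gradient F x) (y - x) + (β / 2) * ‖y - x‖ ^ 2)
    (hqp : p ≤ q)
    (hEp : ∀ i, unifExp k r (fun S => Y i S) = 1 - p)
    (hEq : ∀ i j, i ≠ j → unifExp k r (fun S => Y i S * Y j S) = 1 - q) :
    unifExp k r (fun S => F (x - β⁻¹ • ((1 / nn) • ∑ i, Y i S • g i)))
      ≤ F x - ((1 - p) / (2 * β)) * ‖gradient F x‖ ^ 2 + (q - p) * M / (2 * β * nn ^ 2) := by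
  classical
  have hN : (0:ℝ) < (k.choose r : ℝ) := by exact_mod_cast Nat.choose_pos hr
  set P := Finset.powersetCard r (Finset.univ : Finset (Fin k)) with hP
  have hcardP : (P.card : ℝ) = (k.choose r : ℝ) := by
    rw [hP, Finset.card_powersetCard]; simp
  set N := ((k.choose r : ℕ) : ℝ) with hNdef
  set G : Finset (Fin k) → EuclideanSpace ℝ (Fin d) :=
    fun S => (1 / nn) • ∑ i, Y i S • g i with hGdef
  set u : EuclideanSpace ℝ (Fin d) := ∑ i, g i with hu
  set T : ℝ := (inner ℝ u u : ℝ) with hT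
  set D : ℝ := ∑ i, (inner ℝ (g i) (g i) : ℝ) with hD
  have hT0 : 0 ≤ T := real_inner_self_nonneg
  have hDM : D ≤ M := by
    rw [hD]
    calc ∑ i, (inner ℝ (g i) (g i) : ℝ) = ∑ i, ‖g i‖ ^ 2 := by
          exact Finset.sum_congr rfl fun i _ => real_inner_self_eq_norm_sq _
      _ ≤ M := hgbound
  have hnormF : ‖gradient F x‖ ^ 2 = (1 / nn) ^ 2 * T := by
    rw [← real_inner_self_eq_norm_sq, hgrad, real_inner_smul_left, real_inner_smul_right, ← hT]
    ring
  -- inner ℝ expansions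
  have hinnerF : ∀ i, (inner ℝ (gradient F x) (g i) : ℝ) = (1/nn) * inner ℝ u (g i) := by
    intro i; rw [hgrad, real_inner_smul_left]
  have hsumYY : ∀ i j, ∑ S ∈ P, Y i S * Y j S = (if i = j then (1-p) else (1-q)) * N := by
    intro i j
    by_cases hij : i = j
    · subst hij
      have h1 : ∀ S, Y i S * Y i S = Y i S := fun S => by
        rcases hY01 i S with h | h <;> rw [h] <;> ring
      rw [Finset.sum_congr rfl fun S _ => h1 S]
      have := hEp i; rw [unifExp, div_eq_iff hN.ne'] at this
      simpa using this
    · have := hEq i j hij; rw [unifExp, div_eq_iff hN.ne'] at this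
      simpa [hij] using this
  have hsumY : ∀ i, ∑ S ∈ P, Y i S = (1-p) * N := by
    intro i; have := hEp i; rw [unifExp, div_eq_iff hN.ne'] at this; exact this
  -- A
  have hA : ∑ S ∈ P, (inner ℝ (gradient F x) (G S) : ℝ) = N * ((1-p) * (1/nn)^2 * T) := by
    have h1 : ∀ S, (inner ℝ (gradient F x) (G S) : ℝ)
        = (1/nn) * ∑ i, Y i S * ((1/nn) * inner ℝ u (g i)) := by
      intro S
      rw [hGdef]
      rw [real_inner_smul_right, inner_sum]
      congr 1
      exact Finset.sum_congr rfl fun i _ => by rw [real_inner_smul_right, hinnerF i]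
    calc ∑ S ∈ P, (inner ℝ (gradient F x) (G S) : ℝ)
        = (1/nn) * ∑ i, (∑ S ∈ P, Y i S) * ((1/nn) * inner ℝ u (g i)) := by
          rw [Finset.sum_congr rfl fun S _ => h1 S, ← Finset.mul_sum, Finset.sum_comm]
          congr 1
          exact Finset.sum_congr rfl fun i _ => (Finset.sum_mul _ _ _).symm
      _ = (1/nn) * ∑ i, (1-p) * N * ((1/nn) * inner ℝ u (g i)) := by
          congr 1; exact Finset.sum_congr rfl fun i _ => by rw [hsumY i]
      _ = (1-p) * N * ((1/nn)^2 * ∑ i, (inner ℝ u (g i) : ℝ)) := by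
          simp only [Finset.mul_sum]
          exact Finset.sum_congr rfl fun i _ => by ring
      _ = N * ((1-p) * (1/nn)^2 * T) := by
          rw [hT, hu, inner_sum]; ring
  -- B
  have hB : ∑ S ∈ P, ‖G S‖ ^ 2
      = N * ((1-q) * (1/nn)^2 * T + (q-p) * (1/nn)^2 * D) := by
    have h1 : ∀ S, ‖G S‖ ^ 2
        = (1/nn)^2 * ∑ i, ∑ j, (Y i S * Y j S) * inner ℝ (g i) (g j) := by
      intro S
      rw [← real_inner_self_eq_norm_sq, hGdef]
      rw [real_inner_smul_left, real_inner_smul_right, sum_inner]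
      have h2 : ∀ i, (inner ℝ (Y i S • g i) (∑ j, Y j S • g j) : ℝ)
          = ∑ j, (Y i S * Y j S) * inner ℝ (g i) (g j) := by
        intro i
        rw [inner_sum]
        exact Finset.sum_congr rfl fun j _ => by
          rw [real_inner_smul_left, real_inner_smul_right]; ring
      rw [Finset.sum_congr rfl fun i _ => h2 i]; ring
    calc ∑ S ∈ P, ‖G S‖ ^ 2
        = (1/nn)^2 * ∑ i, ∑ j, (∑ S ∈ P, Y i S * Y j S) * inner ℝ (g i) (g j) := by
          rw [Finset.sum_congr rfl fun S _ => h1 S, ← Finset.mul_sum, Finset.sum_comm]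
          congr 1
          refine Finset.sum_congr rfl fun i _ => ?_
          rw [Finset.sum_comm]
          exact Finset.sum_congr rfl fun j _ => (Finset.sum_mul _ _ _).symm
      _ = (1/nn)^2 * ∑ i, ∑ j, ((if i = j then (1-p) else (1-q)) * N) * inner ℝ (g i) (g j) := by
          congr 1
          exact Finset.sum_congr rfl fun i _ =>
            Finset.sum_congr rfl fun j _ => by rw [hsumYY i j]
      _ = (1/nn)^2 * ∑ i, ∑ j, ((1-q) * N * inner ℝ (g i) (g j)
            + (if i = j then (q-p) * N * inner ℝ (g i) (g j) else 0)) := by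
          congr 1
          refine Finset.sum_congr rfl fun i _ => Finset.sum_congr rfl fun j _ => ?_
          by_cases hij : i = j <;> simp [hij] <;> ring
      _ = (1/nn)^2 * ((1-q) * N * ∑ i, ∑ j, (inner ℝ (g i) (g j) : ℝ)
            + (q-p) * N * D) := by
          congr 1
          rw [Finset.sum_congr rfl fun i (_ : i ∈ Finset.univ) => Finset.sum_add_distrib]
          rw [Finset.sum_add_distrib]
          congr 1
          · rw [Finset.mul_sum]
            exact Finset.sum_congr rfl fun i _ => by rw [Finset.mul_sum]
          · rw [hD, Finset.mul_sum]
            exact Finset.sum_congr rfl fun i _ => by rw [Finset.sum_ite_eq Finset.univ i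
              (fun j => (q-p) * N * inner ℝ (g i) (g j))]; simp
      _ = N * ((1-q) * (1/nn)^2 * T + (q-p) * (1/nn)^2 * D) := by
          have : ∑ i, ∑ j, (inner ℝ (g i) (g j) : ℝ) = T := by
            rw [hT, hu, sum_inner]
            exact Finset.sum_congr rfl fun i _ => (inner_sum _ _ _).symm
          rw [this]; ring
  -- pointwise smoothness
  have key : ∀ S ∈ P, F (x - β⁻¹ • G S)
      ≤ F x - β⁻¹ * inner ℝ (gradient F x) (G S) + (1/(2*β)) * ‖G S‖ ^ 2 := by
    intro S _
    have h := hsmooth (x - β⁻¹ • G S)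
    have h1 : x - β⁻¹ • G S - x = -(β⁻¹ • G S) := by abel
    rw [h1] at h
    have h2 : (inner ℝ (gradient F x) (-(β⁻¹ • G S)) : ℝ)
        = -(β⁻¹ * inner ℝ (gradient F x) (G S)) := by
      rw [inner_neg_right, real_inner_smul_right]
    have h3 : (β/2) * ‖-(β⁻¹ • G S)‖ ^ 2 = (1/(2*β)) * ‖G S‖ ^ 2 := by
      rw [norm_neg, norm_smul, Real.norm_eq_abs, abs_of_pos (inv_pos.mpr hβ), mul_pow]
      field_simp
    rw [h2, h3] at h; linarith
  -- assemble
  have hsum : ∑ S ∈ P, F (x - β⁻¹ • G S)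
      ≤ N * F x - β⁻¹ * (N * ((1-p) * (1/nn)^2 * T))
        + (1/(2*β)) * (N * ((1-q) * (1/nn)^2 * T + (q-p) * (1/nn)^2 * D)) := by
    calc ∑ S ∈ P, F (x - β⁻¹ • G S)
        ≤ ∑ S ∈ P, (F x - β⁻¹ * inner ℝ (gradient F x) (G S) + (1/(2*β)) * ‖G S‖ ^ 2) :=
          Finset.sum_le_sum key
      _ = N * F x - β⁻¹ * ∑ S ∈ P, (inner ℝ (gradient F x) (G S) : ℝ)
            + (1/(2*β)) * ∑ S ∈ P, ‖G S‖ ^ 2 := by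
          rw [Finset.sum_add_distrib, Finset.sum_sub_distrib, Finset.sum_const,
            ← Finset.mul_sum, ← Finset.mul_sum, nsmul_eq_mul, hcardP]
      _ = _ := by rw [hA, hB]
  have hfin : unifExp k r (fun S => F (x - β⁻¹ • ((1 / nn) • ∑ i, Y i S • g i)))
      = (∑ S ∈ P, F (x - β⁻¹ • G S)) / N := rfl
  rw [hfin, hnormF, div_le_iff₀ hN]
  have hq0 : 0 ≤ q - p := by linarith
  have hd : (1/nn)^2 * D ≤ M / nn^2 := by
    have h : (1/nn)^2 * D = D / nn^2 := by field_simp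
    rw [h]
    gcongr
  have ht0 : 0 ≤ (1/nn)^2 * T := by positivity
  have e1 : (q-p) * ((1/nn)^2 * D) ≤ (q-p) * (M/nn^2) := mul_le_mul_of_nonneg_left hd hq0
  have e2 : 0 ≤ (q-p) * ((1/nn)^2 * T) := mul_nonneg hq0 ht0
  have e3 : (q-p)*((1/nn)^2*D) ≤ (q-p)*(M/nn^2) + (q-p)*((1/nn)^2*T) := by linarith
  have e4 := mul_le_mul_of_nonneg_left e3 (show (0:ℝ) ≤ β⁻¹*N/2 by positivity)
  have hβ' : β ≠ 0 := hβ.ne'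
  have r1 : (1:ℝ)/(2*β) = β⁻¹/2 := by
    rw [mul_comm, ← div_div, one_div]
  have r2 : (1-p)/(2*β) = β⁻¹*(1-p)/2 := by
    rw [mul_comm, ← div_div, div_eq_mul_inv (1-p) β, mul_comm (1-p) β⁻¹]
  have r3 : (q-p)*M/(2*β*nn^2) = β⁻¹*((q-p)*(M/nn^2))/2 := by
    field_simp
  rw [r2, r3]
  rw [r1] at hsum
  linarith [hsum, e4]

/-- One-step descent of ErasureHead with step size `(1-p)/β` on a `β`-smooth function:
`E[f(x')] ≤ f(x) - ((1-p)/(2β))‖∇f(x)‖² + (q-p)cσ²/(2βn)` for the step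
`x' = x - ((1-p)/β) ĝ(x)`, where `E[Yᵢ] = 1-p` and `E[YᵢYⱼ] = 1-q` for `i ≠ j`. -/
theorem erasurehead_one_step_descent {d n k c r ℓ : ℕ} (hn : 0 < n) (hc : c ∣ n)
    (hr : r ≤ k) (hℓ : ℓ = k * c / n) (h2ℓ : 2 * ℓ ≤ k)
    (W : Fin (n / c) → Finset (Fin k))
    (hWcard : ∀ i, (W i).card = ℓ)
    (hWdisj : ∀ i j, i ≠ j → Disjoint (W i) (W j))
    (f : Fin n → EuclideanSpace ℝ (Fin d) → ℝ)
    (hdiff : ∀ i, Differentiable ℝ (f i))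
    (σ β : ℝ) (hβ : 0 < β)
    (hσ : ∀ i x, ‖gradient (f i) x‖ ≤ σ)
    (F : EuclideanSpace ℝ (Fin d) → ℝ)
    (hF : F = fun y => (1 / (n : ℝ)) * ∑ i, f i y)
    (hsmooth : ∀ x y, F y ≤ F x + inner ℝ (gradient F x) (y - x) + (β / 2) * ‖y - x‖ ^ 2)
    (p q : ℝ) (hp1 : p < 1)
    (hEp : ∀ i, unifExp k r (fun S => if (S ∩ W i).Nonempty then (1 : ℝ) else 0) = 1 - p)
    (hEq : ∀ i j, i ≠ j →
      unifExp k r (fun S =>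
        (if (S ∩ W i).Nonempty then (1 : ℝ) else 0) *
          (if (S ∩ W j).Nonempty then (1 : ℝ) else 0)) = 1 - q)
    (x : EuclideanSpace ℝ (Fin d)) :
    unifExp k r (fun S =>
        F (x - ((1 - p) / β) • ((1 - p)⁻¹ •
          ((1 / (n : ℝ)) • ∑ i : Fin (n / c),
            (if (S ∩ W i).Nonempty then (1 : ℝ) else 0) •
              ∑ j : Fin c, gradient (f (taskIdx n c hc i j)) x))))
      ≤ F x - ((1 - p) / (2 * β)) * ‖gradient F x‖ ^ 2
        + (q - p) * c * σ ^ 2 / (2 * β * n) := by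
  classical
  have hcpos : 0 < c := Nat.pos_of_dvd_of_pos hc hn
  have h1p : (0:ℝ) < 1 - p := by linarith
  have hnR : (0:ℝ) < (n:ℝ) := by exact_mod_cast hn
  have hNpos : (0:ℝ) < (k.choose r : ℝ) := by exact_mod_cast Nat.choose_pos hr
  -- gradient of F
  have hgradsum : gradient F x
      = (1/(n:ℝ)) • ∑ i : Fin (n/c), ∑ j : Fin c, gradient (f (taskIdx n c hc i j)) x := by
    rw [hF, eh_grad_avg f hdiff x, sum_taskIdx hn hc (fun t => gradient (f t) x)]
  -- σ is nonnegative
  have hσ0 : (0:ℝ) ≤ σ := le_trans (norm_nonneg _) (hσ ⟨0, hn⟩ x)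
  -- p ≤ q
  have hqp : p ≤ q := by
    by_cases hm : 2 ≤ n / c
    · have hne : (⟨0, by omega⟩ : Fin (n/c)) ≠ ⟨1, by omega⟩ := by simp [Fin.ext_iff]
      have h1 := hEp (⟨0, by omega⟩ : Fin (n/c))
      have h2 := hEq (⟨0, by omega⟩ : Fin (n/c)) ⟨1, by omega⟩ hne
      rw [unifExp, div_eq_iff hNpos.ne'] at h1 h2
      have hle : ∑ S ∈ Finset.powersetCard r (Finset.univ : Finset (Fin k)),
          ((if (S ∩ W ⟨0, by omega⟩).Nonempty then (1:ℝ) else 0) *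
            (if (S ∩ W ⟨1, by omega⟩).Nonempty then (1:ℝ) else 0))
          ≤ ∑ S ∈ Finset.powersetCard r (Finset.univ : Finset (Fin k)),
            (if (S ∩ W ⟨0, by omega⟩).Nonempty then (1:ℝ) else 0) := by
        refine Finset.sum_le_sum fun S _ => ?_
        by_cases ha : (S ∩ W ⟨0, by omega⟩).Nonempty <;>
          by_cases hb : (S ∩ W ⟨1, by omega⟩).Nonempty <;> simp [ha, hb]
      rw [h1, h2] at hle
      have := le_of_mul_le_mul_right hle hNpos
      linarith
    · exfalso
      have hpos : 0 < n / c := Nat.div_pos (Nat.le_of_dvd hn hc) hcpos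
      have h1 : n / c = 1 := by omega
      have hcn : c = n := by
        have h2 := Nat.div_mul_cancel hc
        rw [h1, one_mul] at h2; exact h2
      have hlk : ℓ = k := by
        rw [hℓ, hcn]; exact Nat.mul_div_cancel _ hn
      have hk0 : k = 0 := by omega
      have hr0 : r = 0 := by omega
      have h3 := hEp (⟨0, by omega⟩ : Fin (n/c))
      rw [unifExp, hr0] at h3
      simp [Finset.filter_singleton] at h3
      linarith
  -- bound on block gradient norms
  have hcast : ((n/c : ℕ):ℝ) * (c:ℝ) = (n:ℝ) := by exact_mod_cast Nat.div_mul_cancel hc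
  have hgb : ∑ i : Fin (n/c), ‖∑ j : Fin c, gradient (f (taskIdx n c hc i j)) x‖ ^ 2
      ≤ (n:ℝ) * c * σ ^ 2 := by
    have hterm : ∀ i : Fin (n/c),
        ‖∑ j : Fin c, gradient (f (taskIdx n c hc i j)) x‖ ^ 2 ≤ ((c:ℝ)*σ)^2 := by
      intro i
      have h1 : ‖∑ j : Fin c, gradient (f (taskIdx n c hc i j)) x‖ ≤ (c:ℝ)*σ := by
        calc ‖∑ j : Fin c, gradient (f (taskIdx n c hc i j)) x‖
            ≤ ∑ j : Fin c, ‖gradient (f (taskIdx n c hc i j)) x‖ := norm_sum_le _ _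
          _ ≤ ∑ _j : Fin c, σ := Finset.sum_le_sum fun j _ => hσ _ x
          _ = (c:ℝ)*σ := by simp [Finset.sum_const, mul_comm]
      exact pow_le_pow_left₀ (norm_nonneg _) h1 2
    calc ∑ i : Fin (n/c), ‖∑ j : Fin c, gradient (f (taskIdx n c hc i j)) x‖ ^ 2
        ≤ ∑ _i : Fin (n/c), ((c:ℝ)*σ)^2 := Finset.sum_le_sum fun i _ => hterm i
      _ = ((n/c : ℕ):ℝ) * ((c:ℝ)*σ)^2 := by simp [Finset.sum_const, mul_comm]
      _ = (n:ℝ) * c * σ ^ 2 := by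
          rw [mul_pow, show ((n/c:ℕ):ℝ) * ((c:ℝ)^2*σ^2) = (((n/c:ℕ):ℝ)*(c:ℝ))*((c:ℝ)*σ^2) by
            ring, hcast]; ring
  -- simplify step size
  have hstepeq : ∀ (v : EuclideanSpace ℝ (Fin d)),
      ((1-p)/β) • ((1-p)⁻¹ • v) = β⁻¹ • v := by
    intro v; rw [smul_smul]; congr 1; field_simp
  simp only [hstepeq]
  have hfinal := eh_aux (m := n/c) hr
    (fun i S => if (S ∩ W i).Nonempty then (1:ℝ) else 0)
    (fun i S => by by_cases h : (S ∩ W i).Nonempty <;> simp [h])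
    (fun i => ∑ j : Fin c, gradient (f (taskIdx n c hc i j)) x)
    F x β p q (n:ℝ) ((n:ℝ)*c*σ^2) hβ hnR hgradsum hgb (hsmooth x) hqp hEp hEq
  have herr : (q-p) * ((n:ℝ)*c*σ^2) / (2*β*(n:ℝ)^2) = (q-p)*c*σ^2/(2*β*n) := by
    field_simp
  rw [herr] at hfinal
  exact hfinal
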